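/- Let F be a properly parametrized Markov multi-map and let u=u₀⋯u_{n−1}∈L_n be a word of the associated SFT. If u_{n−1}∈A₀∪A₁, then u is essential. In particular, A₀∪A₁ ⊆ A^(e). -/

import Mathlib

open Set Topology

/-! ### Generic dynamical notions -/

/-- Topological transitivity of a map. -/
def TopTransitive {α : Type*} [TopologicalSpace α] (T : α → α) : Prop :=
  ∀ U V : Set α, IsOpen U → IsOpen V → U.Nonempty → V.Nonempty →
    ∃ n : ℕ, (T^[n] '' U ∩ V).Nonempty

/-- Topological mixing of a map. -/
def TopMixing {α : Type*} [TopologicalSpace α] (T : α → α) : Prop :=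
  ∀ U V : Set α, IsOpen U → IsOpen V → U.Nonempty → V.Nonempty →
    ∃ N : ℕ, ∀ n, N ≤ n → (T^[n] '' U ∩ V).Nonempty

/-- Density of the set of periodic points of a map. -/
def DensePeriodic {α : Type*} [TopologicalSpace α] (T : α → α) : Prop :=
  Dense {x : α | ∃ p : ℕ, 1 ≤ p ∧ T^[p] x = x}

/-- The metric `d(x,y) = sup_k |x_k - y_k|/(k+1)` on sequence spaces. -/
noncomputable def dseq (x y : ℕ → ℝ) : ℝ := ⨆ k : ℕ, |x k - y k| / ((k : ℝ) + 1)

/-- The specification property for a map `T` with respect to a distance function `d`. -/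
def SpecProp {α : Type*} (T : α → α) (d : α → α → ℝ) : Prop :=
  ∀ ε : ℝ, 0 < ε → ∃ N : ℕ, ∀ l : ℕ, ∀ x : Fin (l + 1) → α, ∀ a b : Fin (l + 1) → ℕ,
    (∀ k, 1 ≤ a k) → (∀ k, a k ≤ b k) →
    (∀ k : Fin l, b k.castSucc < a k.succ ∧ b k.castSucc + N ≤ a k.succ) →
    ∀ p : ℕ, b (Fin.last l) + N ≤ p →
      ∃ z : α, T^[p] z = z ∧
        ∀ k : Fin (l + 1), ∀ i : ℕ, a k ≤ i → i ≤ b k → d (T^[i] z) (T^[i] (x k)) < ε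

/-- The length `ℓ` of a (possibly degenerate) interval. -/
noncomputable def intervalLen (I : Set ℝ) : ℝ := sSup I - sInf I

/-! ### Markov multi-maps -/

/-- A Markov multi-map of the interval, given by a tuple
`(P, A₀, A₁, A₂, D, R, {f_a})` as in the paper, together with the derived data
(inverse maps `g`, interiors `D0`, `R0`, graphs `Gr`, `G0`) which are uniquely
determined by the defining equations below. -/
structure MarkovMultiMap where
  A : Type
  finA : Finite A
  A0 : Set A
  A1 : Set A
  A2 : Set A
  P : Finset ℝ
  D : A → Set ℝ
  R : A → Set ℝ
  f : A → ℝ → ℝ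
  g : A → ℝ → ℝ
  D0 : A → Set ℝ
  R0 : A → Set ℝ
  Gr : A → Set (ℝ × ℝ)
  G0 : A → Set (ℝ × ℝ)
  P_zero : (0 : ℝ) ∈ P
  P_one : (1 : ℝ) ∈ P
  P_sub : (P : Set ℝ) ⊆ Set.Icc 0 1
  A_cover : ∀ a : A, a ∈ A0 ∨ a ∈ A1 ∨ a ∈ A2
  A01 : A0 ∩ A1 = ∅
  A02 : A0 ∩ A2 = ∅
  A12 : A1 ∩ A2 = ∅
  D_A0 : ∀ a ∈ A0, ∃ p ∈ P, ∃ q ∈ P, p < q ∧ (∀ r ∈ P, ¬(p < r ∧ r < q)) ∧ D a = Set.Icc p q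
  D_A12 : ∀ a ∈ A1 ∪ A2, ∃ p ∈ P, D a = {p}
  R_A0 : ∀ a ∈ A0, ∃ u ∈ P, ∃ v ∈ P, u < v ∧ R a = Set.Icc u v
  R_A1 : ∀ a ∈ A1, ∃ u ∈ P, ∃ v ∈ P, u < v ∧ R a = Set.Icc u v ∧
    Set.Icc u v ∩ (P : Set ℝ) = {u, v}
  R_A2 : ∀ a ∈ A2, ∃ u ∈ P, R a = {u}
  f_homeo : ∀ a ∈ A0, ContinuousOn (f a) (D a) ∧ Set.BijOn (f a) (D a) (R a)
  g_A0 : ∀ a ∈ A0, (∀ x ∈ D a, g a (f a x) = x) ∧ ∀ y ∈ R a, g a y ∈ D a ∧ f a (g a y) = y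
  g_A12 : ∀ a ∈ A1 ∪ A2, ∀ y ∈ R a, g a y ∈ D a
  cover : Set.Icc (0 : ℝ) 1 = ⋃ a : A, D a
  D0_A0 : ∀ a ∈ A0, D0 a = interior (D a)
  D0_A12 : ∀ a ∈ A1 ∪ A2, D0 a = D a
  R0_A01 : ∀ a ∈ A0 ∪ A1, R0 a = interior (R a)
  R0_A2 : ∀ a ∈ A2, R0 a = R a
  Gr_A0 : ∀ a ∈ A0, Gr a = {q : ℝ × ℝ | q.1 ∈ D a ∧ q.2 = f a q.1}
  Gr_A12 : ∀ a ∈ A1 ∪ A2, Gr a = (D a) ×ˢ (R a)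
  G0_A0 : ∀ a ∈ A0, G0 a = {q : ℝ × ℝ | q.1 ∈ D0 a ∧ q.2 = f a q.1}
  G0_A1 : ∀ a ∈ A1, G0 a = (D a) ×ˢ (R0 a)
  G0_A2 : ∀ a ∈ A2, G0 a = Gr a

namespace MarkovMultiMap

variable (M : MarkovMultiMap)

/-- The graph `G(F)` of the multi-map. -/
def GF : Set (ℝ × ℝ) := ⋃ a : M.A, M.Gr a

/-- `F` is properly parametrized: the sets `G₀(a)` partition `G(F)`. -/
def ProperlyParametrized : Prop :=
  (⋃ a : M.A, M.G0 a) = M.GF ∧ ∀ a b : M.A, a ≠ b → Disjoint (M.G0 a) (M.G0 b)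

/-- The forward trajectory space `X`. -/
def X : Set (ℕ → ℝ) :=
  {x | (∀ k, x k ∈ Set.Icc (0 : ℝ) 1) ∧ ∀ k, (x k, x (k + 1)) ∈ M.GF}

/-- The left-shift map `T` on the forward trajectory space. -/
def shift : M.X → M.X :=
  fun x => ⟨fun k => x.1 (k + 1), ⟨fun k => x.2.1 (k + 1), fun k => x.2.2 (k + 1)⟩⟩

/-- The inverse trajectory (inverse limit) space `Y`, encoded by `y k = y_{-k}`. -/
def Y : Set (ℕ → ℝ) :=
  {y | (∀ k, y k ∈ Set.Icc (0 : ℝ) 1) ∧ ∀ k, (y (k + 1), y k) ∈ M.GF}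

/-- The right-shift map `S` on the inverse limit space (in the encoding `y k = y_{-k}`). -/
def ishift : M.Y → M.Y :=
  fun y => ⟨fun k => y.1 (k + 1), ⟨fun k => y.2.1 (k + 1), fun k => y.2.2 (k + 1)⟩⟩

/-- The space `X_n` of finite trajectories of length `n`. -/
def finTraj (n : ℕ) : Set (Fin n → ℝ) :=
  {x | (∀ i, x i ∈ Set.Icc (0 : ℝ) 1) ∧
    ∀ i : Fin n, ∀ h : (i : ℕ) + 1 < n, (x i, x ⟨(i : ℕ) + 1, h⟩) ∈ M.GF}

/-- The associated nearest-neighbor SFT `Σ_M`. -/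
def SFT : Set (ℕ → M.A) := {a | ∀ n : ℕ, M.D0 (a (n + 1)) ⊆ M.R0 (a n)}

/-- The word `u` (of length `n`) occurs in some point of `Z`. -/
def WordIn {n : ℕ} (u : Fin n → M.A) (Z : Set (ℕ → M.A)) : Prop :=
  ∃ z ∈ Z, ∃ m : ℕ, ∀ i : Fin n, u i = z (m + (i : ℕ))

/-- `L_n`, the words of length `n` in the language of `Σ_M`. -/
def Lang (n : ℕ) : Set (Fin n → M.A) := {u | M.WordIn u M.SFT}

/-- `(x,u)` is a labeled finite trajectory: `(x_k, x_{k+1}) ∈ G(u_k)` for all `k`. -/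
def Labeled {n : ℕ} (x : Fin (n + 1) → ℝ) (u : Fin n → M.A) : Prop :=
  ∀ i : Fin n, (x i.castSucc, x i.succ) ∈ M.Gr (u i)

/-- `(x,u)` is a special labeled finite trajectory: `(x_k, x_{k+1}) ∈ G₀(u_k)` for all `k`. -/
def SpecialLabeled {n : ℕ} (x : Fin (n + 1) → ℝ) (u : Fin n → M.A) : Prop :=
  ∀ i : Fin n, (x i.castSucc, x i.succ) ∈ M.G0 (u i)

/-- A word `u ∈ L_n` is essential if the set of finite trajectories specially labeled
by `u` is open in `X_{n+1}`. -/
def EssentialWord {n : ℕ} (u : Fin n → M.A) : Prop :=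
  u ∈ M.Lang n ∧ IsOpen {x : M.finTraj (n + 1) | M.SpecialLabeled x.1 u}

/-- A symbol is essential if it appears in some essential word. -/
def EssentialSymbol (a : M.A) : Prop :=
  ∃ n : ℕ, ∃ u : Fin n → M.A, M.EssentialWord u ∧ ∃ i : Fin n, u i = a

/-- `A^(e)`, the set of essential symbols. -/
def Ess : Set M.A := {a | M.EssentialSymbol a}

/-- `E`, the set of essential symbolic sequences. -/
def E : Set (ℕ → M.A) := {z ∈ M.SFT | ∀ i : ℕ, z i ∈ M.Ess}

/-- A word all of whose letters lie in `C`, in the language of `Σ_M`. -/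
def WordOver {n : ℕ} (u : Fin n → M.A) (C : Set M.A) : Prop :=
  u ∈ M.Lang n ∧ ∀ i, u i ∈ C

/-- There is a word of length `n+1` over `C` beginning with `a` and ending with `b`. -/
def WordFromTo (C : Set M.A) (a b : M.A) (n : ℕ) : Prop :=
  ∃ u : Fin (n + 1) → M.A, M.WordOver u C ∧ u 0 = a ∧ u (Fin.last n) = b

/-- `C ⊆ A` is irreducible. -/
def IrreducibleSet (C : Set M.A) : Prop :=
  ∀ a ∈ C, ∀ b ∈ C, ∃ n : ℕ, M.WordFromTo C a b n

/-- `C` is an irreducible component (a maximal irreducible subset of `A`). -/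
def IrreducibleComponent (C : Set M.A) : Prop :=
  M.IrreducibleSet C ∧ ∀ C' : Set M.A, M.IrreducibleSet C' → C ⊆ C' → C' = C

/-- `C ⊆ A` is mixing. -/
def MixingSet (C : Set M.A) : Prop :=
  ∃ N : ℕ, 1 ≤ N ∧ ∀ a ∈ C, ∀ b ∈ C, ∀ n : ℕ, N ≤ n + 1 → M.WordFromTo C a b n

/-- `C` is a mixing component (a maximal mixing subset of `A`). -/
def MixingComponent (C : Set M.A) : Prop :=
  M.MixingSet C ∧ ∀ C' : Set M.A, M.MixingSet C' → C ⊆ C' → C' = C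

/-- The Irreducibility Condition (IC). -/
def IC : Prop := ∃ C : Set M.A, M.IrreducibleComponent C ∧ M.Ess ⊆ C

/-- The Mixing Condition (MC). -/
def MC : Prop := ∃ C : Set M.A, M.MixingComponent C ∧ M.Ess ⊆ C

/-- `Z` is a subshift of `Σ_M`: shift-invariant and closed in the product of discrete
topologies (closedness phrased combinatorially). -/
def IsSubshift (Z : Set (ℕ → M.A)) : Prop :=
  Z ⊆ M.SFT ∧ (∀ z ∈ Z, (fun k => z (k + 1)) ∈ Z) ∧
  ∀ x : ℕ → M.A, (∀ n : ℕ, ∃ z ∈ Z, ∀ i, i < n → z i = x i) → x ∈ Z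

/-- The symbol `a` occurs in some point of `Z`. -/
def SymbolInShift (Z : Set (ℕ → M.A)) (a : M.A) : Prop := ∃ z ∈ Z, ∃ k : ℕ, z k = a

/-- `Z` is transitive on symbols. -/
def TransitiveOnSymbols (Z : Set (ℕ → M.A)) : Prop :=
  ∀ a b : M.A, M.SymbolInShift Z a → M.SymbolInShift Z b →
    ∃ z ∈ Z, ∃ m n : ℕ, z m = a ∧ z (m + n) = b

end MarkovMultiMap

/-- The composition `g_{u₀} ∘ ⋯ ∘ g_{u_n}` of inverse maps along a list of symbols. -/
def gWordList (M : MarkovMultiMap) : List M.A → ℝ → ℝ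
  | [], x => x
  | a :: l, x => M.g a (gWordList M l x)

namespace MarkovMultiMap

/-- The inverse map `g_u` associated to a word `u = u₀⋯u_n`. -/
def gWord (M : MarkovMultiMap) {n : ℕ} (u : Fin (n + 1) → M.A) : ℝ → ℝ :=
  gWordList M (List.ofFn u)

/-- The interval `I_u = g_u(R(u_n))`. -/
def Iword (M : MarkovMultiMap) {n : ℕ} (u : Fin (n + 1) → M.A) : Set ℝ :=
  M.gWord u '' M.R (u (Fin.last n))

/-- The Coding Condition (CC). -/
def CC (M : MarkovMultiMap) : Prop :=
  ∃ Z : Set (ℕ → M.A), M.IsSubshift Z ∧ M.TransitiveOnSymbols Z ∧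
    (∀ y ∈ Set.Icc (0 : ℝ) 1, ∃ a ∈ Z, ∃ x ∈ M.X, x 0 = y ∧
      ∀ i : ℕ, (x i, x (i + 1)) ∈ M.Gr (a i)) ∧
    (∀ ε : ℝ, 0 < ε → ∃ N : ℕ, ∀ n : ℕ, N ≤ n → ∀ u : Fin (n + 1) → M.A,
      M.WordIn u Z → intervalLen (M.Iword u) < ε)

/-- Uniform equicontinuity of the family `{g_u : u ∈ L(C)}`. -/
def UnifEquicontOn (M : MarkovMultiMap) (C : Set M.A) : Prop :=
  ∀ ε : ℝ, 0 < ε → ∃ δ : ℝ, 0 < δ ∧ ∀ n : ℕ, ∀ u : Fin (n + 1) → M.A, M.WordOver u C →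
    ∀ x ∈ M.R (u (Fin.last n)), ∀ y ∈ M.R (u (Fin.last n)),
      |x - y| < δ → |M.gWord u x - M.gWord u y| < ε

end MarkovMultiMap

section AuxStmt5

open Set

/-- A continuous bijection of closed intervals sends "extreme" points to endpoints. -/
lemma boundary_val {f : ℝ → ℝ} {p q u v x : ℝ} (huv : u < v)
    (hc : ContinuousOn f (Set.Icc p q)) (hb : Set.BijOn f (Set.Icc p q) (Set.Icc u v))
    (hx : x ∈ Set.Icc p q)
    (hext : ∀ y z : ℝ, y ∈ Set.Icc p q → z ∈ Set.Icc p q → x ∈ Set.uIcc y z → x = y ∨ x = z) :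
    f x = u ∨ f x = v := by
  by_contra h
  push_neg at h
  have hfx : f x ∈ Set.Icc u v := hb.mapsTo hx
  obtain ⟨s1, hs1, hfs1⟩ := hb.surjOn (Set.left_mem_Icc.2 huv.le)
  obtain ⟨s2, hs2, hfs2⟩ := hb.surjOn (Set.right_mem_Icc.2 huv.le)
  have hsub : Set.uIcc s1 s2 ⊆ Set.Icc p q := (Set.ordConnected_Icc).uIcc_subset hs1 hs2
  have hmem : f x ∈ Set.uIcc (f s1) (f s2) := by
    rw [hfs1, hfs2, Set.uIcc_of_le huv.le]; exact hfx
  obtain ⟨s3, hs3, hfs3⟩ := intermediate_value_uIcc (hc.mono hsub) hmem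
  have hs3x : s3 = x := hb.injOn (hsub hs3) hx hfs3
  rw [hs3x] at hs3
  rcases hext s1 s2 hs1 hs2 hs3 with h1 | h1
  · exact h.1 (by rw [h1]; exact hfs1)
  · exact h.2 (by rw [h1]; exact hfs2)

variable (M : MarkovMultiMap)

lemma not_A2_of (a : M.A) (ha : a ∈ M.A0 ∪ M.A1) : a ∉ M.A2 := by
  intro h2
  rcases ha with h | h
  · have : a ∈ M.A0 ∩ M.A2 := ⟨h, h2⟩
    rw [M.A02] at this; exact this
  · have : a ∈ M.A1 ∩ M.A2 := ⟨h, h2⟩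
    rw [M.A12] at this; exact this

lemma G0_sub_Gr (a : M.A) : M.G0 a ⊆ M.Gr a := by
  rcases M.A_cover a with h | h | h
  · rw [M.G0_A0 a h, M.Gr_A0 a h]
    rintro ⟨s, t⟩ ⟨h1, h2⟩
    rw [M.D0_A0 a h] at h1
    exact ⟨interior_subset h1, h2⟩
  · rw [M.G0_A1 a h, M.Gr_A12 a (Or.inl h)]
    rintro ⟨s, t⟩ ⟨h1, h2⟩
    rw [M.R0_A01 a (Or.inr h)] at h2
    exact ⟨h1, interior_subset h2⟩
  · rw [M.G0_A2 a h]

lemma mem_GF_of_Gr {a : M.A} {w : ℝ × ℝ} (h : w ∈ M.Gr a) : w ∈ M.GF :=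
  Set.mem_iUnion.2 ⟨a, h⟩

lemma fst_mem_D0 {a : M.A} {w : ℝ × ℝ} (h : w ∈ M.G0 a) : w.1 ∈ M.D0 a := by
  rcases M.A_cover a with h0 | h0 | h0
  · rw [M.G0_A0 a h0] at h; exact h.1
  · rw [M.G0_A1 a h0] at h
    rw [M.D0_A12 a (Or.inl h0)]; exact h.1
  · rw [M.G0_A2 a h0, M.Gr_A12 a (Or.inr h0)] at h
    rw [M.D0_A12 a (Or.inr h0)]; exact h.1

lemma Gr_closed (a : M.A) : IsClosed (M.Gr a) := by
  rcases M.A_cover a with h | h | h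
  · obtain ⟨p, hp, q, hq, hpq, hcons, hD⟩ := M.D_A0 a h
    have hf := M.f_homeo a h
    have himg : M.Gr a = (fun s => (s, M.f a s)) '' M.D a := by
      rw [M.Gr_A0 a h]; ext ⟨s, t⟩
      constructor
      · rintro ⟨h1, h2⟩; exact ⟨s, h1, by simp [h2.symm]⟩
      · rintro ⟨s', hs', he⟩
        have e1 : s' = s := congrArg Prod.fst he
        have e2 : M.f a s' = t := congrArg Prod.snd he
        subst e1
        exact ⟨hs', e2.symm⟩
    rw [himg]
    have hcp : IsCompact (M.D a) := by rw [hD]; exact isCompact_Icc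
    exact (hcp.image_of_continuousOn (continuousOn_id.prodMk hf.1)).isClosed
  · obtain ⟨p, hp, hD⟩ := M.D_A12 a (Or.inl h)
    obtain ⟨u, hu, v, hv, huv, hR, _⟩ := M.R_A1 a h
    rw [M.Gr_A12 a (Or.inl h), hD, hR]
    exact isClosed_singleton.prod isClosed_Icc
  · obtain ⟨p, hp, hD⟩ := M.D_A12 a (Or.inr h)
    obtain ⟨u, hu, hR⟩ := M.R_A2 a h
    rw [M.Gr_A12 a (Or.inr h), hD, hR]
    exact isClosed_singleton.prod isClosed_singleton

lemma GrDiff_finite (a : M.A) (ha : a ∈ M.A0 ∪ M.A1) : (M.Gr a \ M.G0 a).Finite := by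
  rcases ha with h | h
  · obtain ⟨p, hp, q, hq, hpq, hcons, hD⟩ := M.D_A0 a h
    apply Set.Finite.subset ((Set.finite_singleton (p, M.f a p)).insert (q, M.f a q))
    rintro ⟨s, t⟩ ⟨hGr, hG0⟩
    rw [M.Gr_A0 a h] at hGr
    have hs : s ∈ Set.Icc p q := by rw [hD] at hGr; exact hGr.1
    have hnot : s ∉ Set.Ioo p q := by
      intro hio
      apply hG0
      rw [M.G0_A0 a h]
      exact ⟨by rw [M.D0_A0 a h, hD, interior_Icc]; exact hio, hGr.2⟩
    have hpqs : s = p ∨ s = q := by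
      rcases eq_or_lt_of_le hs.1 with h1 | h1
      · exact Or.inl h1.symm
      rcases eq_or_lt_of_le hs.2 with h2 | h2
      · exact Or.inr h2
      exact absurd ⟨h1, h2⟩ hnot
    rcases hpqs with h1 | h1
    · refine Or.inr ?_
      rw [Set.mem_singleton_iff, Prod.mk.injEq]
      exact ⟨h1, hGr.2.trans (by rw [h1])⟩
    · refine Or.inl ?_
      rw [Prod.mk.injEq]
      exact ⟨h1, hGr.2.trans (by rw [h1])⟩
  · obtain ⟨p, hp, hD⟩ := M.D_A12 a (Or.inl h)
    obtain ⟨u, hu, v, hv, huv, hR, _⟩ := M.R_A1 a h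
    apply Set.Finite.subset ((Set.finite_singleton (p, u)).insert (p, v))
    rintro ⟨s, t⟩ ⟨hGr, hG0⟩
    rw [M.Gr_A12 a (Or.inl h), hD, hR] at hGr
    have hs : s = p := hGr.1
    have ht : t ∈ Set.Icc u v := hGr.2
    have hnot : t ∉ Set.Ioo u v := by
      intro hio
      apply hG0
      rw [M.G0_A1 a h, hD]
      exact ⟨hs, by rw [M.R0_A01 a (Or.inr h), hR, interior_Icc]; exact hio⟩
    have huvt : t = u ∨ t = v := by
      rcases eq_or_lt_of_le ht.1 with h1 | h1
      · exact Or.inl h1.symm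
      rcases eq_or_lt_of_le ht.2 with h2 | h2
      · exact Or.inr h2
      exact absurd ⟨h1, h2⟩ hnot
    rcases huvt with h1 | h1
    · refine Or.inr ?_
      rw [Set.mem_singleton_iff, Prod.mk.injEq]
      exact ⟨hs, h1⟩
    · refine Or.inl ?_
      rw [Prod.mk.injEq]
      exact ⟨hs, h1⟩

lemma disj_G0_Gr (hpp : M.ProperlyParametrized) (a b : M.A) (ha : a ∈ M.A0 ∪ M.A1)
    (hne : b ≠ a) {w : ℝ × ℝ} (hwa : w ∈ M.G0 a) (hwb : w ∈ M.Gr b) : False := by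
  obtain ⟨s, t⟩ := w
  rcases ha with hA | hA
  · -- a ∈ A0
    obtain ⟨p, hp, q, hq, hpq, hcons, hD⟩ := M.D_A0 a hA
    have hwa' := hwa
    rw [M.G0_A0 a hA] at hwa'
    obtain ⟨hs0, ht⟩ := hwa'
    rw [M.D0_A0 a hA, hD, interior_Icc] at hs0
    have hsP : s ∉ (M.P : Set ℝ) := fun hmem => hcons s hmem ⟨hs0.1, hs0.2⟩
    rcases M.A_cover b with hB | hB | hB
    · obtain ⟨p', hp', q', hq', hpq', hcons', hD'⟩ := M.D_A0 b hB
      rw [M.Gr_A0 b hB] at hwb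
      obtain ⟨hsb, htb⟩ := hwb
      have hsb' : s ∈ Set.Ioo p' q' := by
        rw [hD'] at hsb
        rcases eq_or_lt_of_le hsb.1 with h1 | h1
        · exact absurd (by rw [show s = p' from h1.symm]; exact hp') hsP
        rcases eq_or_lt_of_le hsb.2 with h2 | h2
        · exact absurd (by rw [show s = q' from h2]; exact hq') hsP
        exact ⟨h1, h2⟩
      have hG0b : (s, t) ∈ M.G0 b := by
        rw [M.G0_A0 b hB]
        exact ⟨by rw [M.D0_A0 b hB, hD', interior_Icc]; exact hsb', htb⟩
      exact Set.disjoint_left.mp (hpp.2 b a hne) hG0b hwa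
    · obtain ⟨p'', hp'', hD''⟩ := M.D_A12 b (Or.inl hB)
      rw [M.Gr_A12 b (Or.inl hB), hD''] at hwb
      exact hsP (by rw [show s = p'' from hwb.1]; exact hp'')
    · obtain ⟨p'', hp'', hD''⟩ := M.D_A12 b (Or.inr hB)
      rw [M.Gr_A12 b (Or.inr hB), hD''] at hwb
      exact hsP (by rw [show s = p'' from hwb.1]; exact hp'')
  · -- a ∈ A1
    obtain ⟨p, hp, hD⟩ := M.D_A12 a (Or.inl hA)
    obtain ⟨uu, huu, vv, hvv, huv, hR, hRP⟩ := M.R_A1 a hA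
    have hwa' := hwa
    rw [M.G0_A1 a hA] at hwa'
    have hs : s = p := by have := hwa'.1; rw [hD] at this; exact this
    have ht : t ∈ Set.Ioo uu vv := by
      have := hwa'.2
      rwa [M.R0_A01 a (Or.inr hA), hR, interior_Icc] at this
    have htP : t ∉ (M.P : Set ℝ) := by
      intro hmem
      have htuv : t ∈ ({uu, vv} : Set ℝ) := by
        rw [← hRP]; exact ⟨⟨ht.1.le, ht.2.le⟩, hmem⟩
      rcases htuv with h1 | h1
      · rw [h1] at ht; exact lt_irrefl _ ht.1
      · rw [Set.mem_singleton_iff.mp h1] at ht; exact lt_irrefl _ ht.2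
    rcases M.A_cover b with hB | hB | hB
    · obtain ⟨p', hp', q', hq', hpq', hcons', hD'⟩ := M.D_A0 b hB
      obtain ⟨u', hu', v', hv', huv', hR'⟩ := M.R_A0 b hB
      rw [M.Gr_A0 b hB] at hwb
      have hsD : s ∈ Set.Icc p' q' := by rw [hD'] at hwb; exact hwb.1
      have hsend : s = p' ∨ s = q' := by
        by_contra hcon
        push_neg at hcon
        exact hcons' s (by rw [hs]; exact hp)
          ⟨lt_of_le_of_ne hsD.1 (Ne.symm hcon.1), lt_of_le_of_ne hsD.2 hcon.2⟩
      have hfh := M.f_homeo b hB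
      have hfP : M.f b s = u' ∨ M.f b s = v' := by
        apply boundary_val huv' (by rw [← hD', ← hR'] at *; exact hfh.1)
          (by rw [← hD', ← hR']; exact hfh.2) hsD
        intro y z hy hz hmem
        rw [Set.mem_uIcc] at hmem
        rcases hsend with hsp | hsq
        · rcases hmem with ⟨h1, _⟩ | ⟨h1, _⟩
          · exact Or.inl (le_antisymm (by rw [hsp]; exact hy.1) h1)
          · exact Or.inr (le_antisymm (by rw [hsp]; exact hz.1) h1)
        · rcases hmem with ⟨_, h2⟩ | ⟨_, h2⟩
          · exact Or.inr (le_antisymm h2 (by rw [hsq]; exact hz.2))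
          · exact Or.inl (le_antisymm h2 (by rw [hsq]; exact hy.2))
      have htf : t = M.f b s := hwb.2
      rcases hfP with h1 | h1
      · exact htP (by rw [htf, h1]; exact hu')
      · exact htP (by rw [htf, h1]; exact hv')
    · obtain ⟨p'', hp'', hD''⟩ := M.D_A12 b (Or.inl hB)
      obtain ⟨u'', hu'', v'', hv'', huv'', hR'', _⟩ := M.R_A1 b hB
      rw [M.Gr_A12 b (Or.inl hB)] at hwb
      have htR : t ∈ Set.Icc u'' v'' := by rw [hR''] at hwb; exact hwb.2
      have ht0 : t ∈ Set.Ioo u'' v'' := by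
        rcases eq_or_lt_of_le htR.1 with h1 | h1
        · exact absurd (by rw [← h1]; exact hu'') htP
        rcases eq_or_lt_of_le htR.2 with h2 | h2
        · exact absurd (by rw [h2]; exact hv'') htP
        exact ⟨h1, h2⟩
      have hwb0 : (s, t) ∈ M.G0 b := by
        rw [M.G0_A1 b hB]
        exact ⟨hwb.1, by rw [M.R0_A01 b (Or.inr hB), hR'', interior_Icc]; exact ht0⟩
      exact Set.disjoint_left.mp (hpp.2 b a hne) hwb0 hwa
    · have hwb0 : (s, t) ∈ M.G0 b := by rw [M.G0_A2 b hB]; exact hwb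
      exact Set.disjoint_left.mp (hpp.2 b a hne) hwb0 hwa

lemma G0_open (hpp : M.ProperlyParametrized) (a : M.A) (ha : a ∈ M.A0 ∪ M.A1)
    (w : ℝ × ℝ) (hw : w ∈ M.G0 a) :
    ∃ ε > 0, ∀ w' ∈ M.GF, dist w' w < ε → w' ∈ M.G0 a := by
  have : Finite M.A := M.finA
  set K := (⋃ b : {b : M.A // b ≠ a}, M.Gr b.1) ∪ (M.Gr a \ M.G0 a) with hKdef
  have hK : IsClosed K :=
    (isClosed_iUnion_of_finite fun b : {b : M.A // b ≠ a} => Gr_closed M b.1).union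
      (GrDiff_finite M a ha).isClosed
  have hwK : w ∉ K := by
    rintro (hmem | hmem)
    · rw [Set.mem_iUnion] at hmem
      obtain ⟨b, hb⟩ := hmem
      exact disj_G0_Gr M hpp a b.1 ha b.2 hw hb
    · exact hmem.2 hw
  obtain ⟨ε, hε, hball⟩ := Metric.isOpen_iff.1 hK.isOpen_compl w hwK
  refine ⟨ε, hε, fun w' hw' hd => ?_⟩
  have hnK : w' ∉ K := hball (Metric.mem_ball.2 hd)
  rw [MarkovMultiMap.GF, Set.mem_iUnion] at hw'
  obtain ⟨b, hb⟩ := hw'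
  by_cases hba : b = a
  · subst hba
    by_contra hno
    exact hnK (Or.inr ⟨hb, hno⟩)
  · exact absurd (Or.inl (Set.mem_iUnion.2 ⟨⟨b, hba⟩, hb⟩)) hnK

lemma fiber_isolated (q p : ℝ) : ∃ ε > 0, ∀ s, (s, q) ∈ M.GF → |s - p| < ε → s = p := by
  have : Finite M.A := M.finA
  have hfin : {s : ℝ | (s, q) ∈ M.GF}.Finite := by
    have hsub : {s : ℝ | (s, q) ∈ M.GF} ⊆ ⋃ b : M.A, {s | (s, q) ∈ M.Gr b} := by
      intro s hs
      rw [Set.mem_setOf_eq, MarkovMultiMap.GF, Set.mem_iUnion] at hs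
      exact Set.mem_iUnion.2 hs
    refine Set.Finite.subset (Set.finite_iUnion fun b => ?_) hsub
    rcases M.A_cover b with hB | hB | hB
    · refine Set.Finite.subset (Set.finite_singleton (M.g b q)) ?_
      intro s hs
      rw [Set.mem_setOf_eq, M.Gr_A0 b hB] at hs
      have hg := (M.g_A0 b hB).1 s hs.1
      rw [← hs.2] at hg
      exact hg.symm
    · obtain ⟨p'', hp'', hD''⟩ := M.D_A12 b (Or.inl hB)
      refine Set.Finite.subset (Set.finite_singleton p'') ?_
      intro s hs
      rw [Set.mem_setOf_eq, M.Gr_A12 b (Or.inl hB), hD''] at hs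
      exact hs.1
    · obtain ⟨p'', hp'', hD''⟩ := M.D_A12 b (Or.inr hB)
      refine Set.Finite.subset (Set.finite_singleton p'') ?_
      intro s hs
      rw [Set.mem_setOf_eq, M.Gr_A12 b (Or.inr hB), hD''] at hs
      exact hs.1
  have hfin' : ({s : ℝ | (s, q) ∈ M.GF} \ {p}).Finite := hfin.diff
  have hop : IsOpen ({s : ℝ | (s, q) ∈ M.GF} \ {p})ᶜ := hfin'.isClosed.isOpen_compl
  have hpmem : p ∈ ({s : ℝ | (s, q) ∈ M.GF} \ {p})ᶜ := fun hmem => hmem.2 rfl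
  obtain ⟨ε, hε, hball⟩ := Metric.isOpen_iff.1 hop p hpmem
  refine ⟨ε, hε, fun s hs hd => ?_⟩
  by_contra hne
  exact hball (by rw [Metric.mem_ball, Real.dist_eq]; exact hd) ⟨hs, hne⟩

lemma lang_chain {n : ℕ} {u : Fin (n + 1) → M.A} (hu : u ∈ M.Lang (n + 1))
    (k : ℕ) (hk : k + 1 < n + 1) :
    M.D0 (u ⟨k + 1, hk⟩) ⊆ M.R0 (u ⟨k, by omega⟩) := by
  obtain ⟨z, hz, m, hm⟩ := hu
  have h1 : u ⟨k + 1, hk⟩ = z (m + k + 1) := by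
    rw [hm ⟨k + 1, hk⟩]; rfl
  have h2 : u ⟨k, by omega⟩ = z (m + k) := by
    rw [hm ⟨k, by omega⟩]
  rw [h1, h2]
  exact hz (m + k)

lemma traj_pair {n : ℕ} {x : Fin (n + 2) → ℝ} (hx : x ∈ M.finTraj (n + 2))
    (i : Fin (n + 1)) : (x i.castSucc, x i.succ) ∈ M.GF := by
  have h1 : ((i.castSucc : Fin (n + 2)) : ℕ) + 1 < n + 2 := by
    simp only [Fin.coe_castSucc]; omega
  have := hx.2 i.castSucc h1
  have he : (⟨((i.castSucc : Fin (n + 2)) : ℕ) + 1, h1⟩ : Fin (n + 2)) = i.succ := by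
    apply Fin.ext; simp
  rwa [he] at this

lemma exists_next (b : M.A) (hb : b ∈ M.A0 ∪ M.A1) :
    ∃ c : M.A, c ∈ M.A0 ∧ M.D0 c ⊆ M.R0 b := by
  obtain ⟨uu, huu, vv, hvv, huv, hR⟩ :
      ∃ uu ∈ M.P, ∃ vv ∈ M.P, uu < vv ∧ M.R b = Set.Icc uu vv := by
    rcases hb with h | h
    · obtain ⟨uu, h1, vv, h2, h3, h4⟩ := M.R_A0 b h; exact ⟨uu, h1, vv, h2, h3, h4⟩
    · obtain ⟨uu, h1, vv, h2, h3, h4, _⟩ := M.R_A1 b h; exact ⟨uu, h1, vv, h2, h3, h4⟩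
  have hR0 : M.R0 b = Set.Ioo uu vv := by rw [M.R0_A01 b hb, hR, interior_Icc]
  have hinf : (Set.Ioo uu vv \ (M.P : Set ℝ)).Infinite :=
    (Set.Ioo_infinite huv).diff M.P.finite_toSet
  obtain ⟨s, hs⟩ := hinf.nonempty
  have hs01 : s ∈ Set.Icc (0 : ℝ) 1 := by
    have h1 := M.P_sub huu
    have h2 := M.P_sub hvv
    exact ⟨le_trans h1.1 hs.1.1.le, le_trans hs.1.2.le h2.2⟩
  have hsD : s ∈ ⋃ c : M.A, M.D c := by rw [← M.cover]; exact hs01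
  rw [Set.mem_iUnion] at hsD
  obtain ⟨c, hc⟩ := hsD
  rcases M.A_cover c with hC | hC | hC
  · obtain ⟨p', hp', q', hq', hpq', hcons', hD'⟩ := M.D_A0 c hC
    refine ⟨c, hC, ?_⟩
    rw [hR0, M.D0_A0 c hC, hD', interior_Icc]
    have hsIcc : s ∈ Set.Icc p' q' := by rw [hD'] at hc; exact hc
    have hso : s ∈ Set.Ioo p' q' := by
      rcases eq_or_lt_of_le hsIcc.1 with h1 | h1
      · exact absurd (by rw [← h1]; exact hp') hs.2
      rcases eq_or_lt_of_le hsIcc.2 with h2 | h2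
      · exact absurd (by rw [h2]; exact hq') hs.2
      exact ⟨h1, h2⟩
    have hup : uu ≤ p' := by
      by_contra hcon
      push_neg at hcon
      exact hcons' uu huu ⟨hcon, lt_trans hs.1.1 hso.2⟩
    have hqv : q' ≤ vv := by
      by_contra hcon
      push_neg at hcon
      exact hcons' vv hvv ⟨lt_trans hso.1 hs.1.2, hcon⟩
    exact Set.Ioo_subset_Ioo hup hqv
  · obtain ⟨p'', hp'', hD''⟩ := M.D_A12 c (Or.inl hC)
    rw [hD''] at hc
    exact absurd (by rw [show s = p'' from hc]; exact hp'') hs.2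
  · obtain ⟨p'', hp'', hD''⟩ := M.D_A12 c (Or.inr hC)
    rw [hD''] at hc
    exact absurd (by rw [show s = p'' from hc]; exact hp'') hs.2

lemma symbol_in_lang (a : M.A) (ha : a ∈ M.A0 ∪ M.A1) :
    (fun _ : Fin 1 => a) ∈ M.Lang 1 := by
  choose nxt hnxt using fun b : {c : M.A // c ∈ M.A0 ∪ M.A1} => exists_next M b.1 b.2
  let z' : ℕ → {c : M.A // c ∈ M.A0 ∪ M.A1} := fun k =>
    Nat.rec ⟨a, ha⟩ (fun _ p => ⟨nxt p, Or.inl (hnxt p).1⟩) k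
  refine ⟨fun k => (z' k).1, ?_, 0, ?_⟩
  · intro k
    exact (hnxt (z' k)).2
  · intro i
    have hi0 : i = 0 := by omega
    subst hi0
    rfl

end AuxStmt5

/-- Every word of the language ending with a letter of `A₀ ∪ A₁` is essential;
in particular `A₀ ∪ A₁ ⊆ A^(e)`. -/
theorem stmt5 (M : MarkovMultiMap) (hpp : M.ProperlyParametrized) :
    (∀ n : ℕ, ∀ u : Fin (n + 1) → M.A, u ∈ M.Lang (n + 1) →
      u (Fin.last n) ∈ M.A0 ∪ M.A1 → M.EssentialWord u) ∧
    M.A0 ∪ M.A1 ⊆ M.Ess := by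
  have part1 : ∀ n : ℕ, ∀ u : Fin (n + 1) → M.A, u ∈ M.Lang (n + 1) →
      u (Fin.last n) ∈ M.A0 ∪ M.A1 → M.EssentialWord u := by
    intro n u hu hlast
    refine ⟨hu, ?_⟩
    rw [Metric.isOpen_iff]
    rintro ⟨x, hxT⟩ hxS
    simp only [Set.mem_setOf_eq] at hxS
    have key : ∀ i : Fin (n + 1), ∃ ε > 0,
        (u i ∈ M.A0 ∪ M.A1 →
          ∀ w' ∈ M.GF, dist w' (x i.castSucc, x i.succ) < ε → w' ∈ M.G0 (u i)) ∧
        (u i ∈ M.A2 →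
          ∀ s, (s, x i.succ) ∈ M.GF → |s - x i.castSucc| < ε → s = x i.castSucc) := by
      intro i
      rcases M.A_cover (u i) with hC | hC | hC
      · obtain ⟨ε, hε, hball⟩ := G0_open M hpp (u i) (Or.inl hC) _ (hxS i)
        exact ⟨ε, hε, fun _ => hball, fun h2 => absurd h2 (not_A2_of M (u i) (Or.inl hC))⟩
      · obtain ⟨ε, hε, hball⟩ := G0_open M hpp (u i) (Or.inr hC) _ (hxS i)
        exact ⟨ε, hε, fun _ => hball, fun h2 => absurd h2 (not_A2_of M (u i) (Or.inr hC))⟩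
      · obtain ⟨ε, hε, hiso⟩ := fiber_isolated M (x i.succ) (x i.castSucc)
        exact ⟨ε, hε, fun h01 => absurd hC (not_A2_of M (u i) h01), fun _ => hiso⟩
    choose εf hεpos hεspec using key
    set ε := Finset.univ.inf' Finset.univ_nonempty εf with hεdef
    have hεpos' : 0 < ε := (Finset.lt_inf'_iff _).2 fun i _ => hεpos i
    have hεle : ∀ i : Fin (n + 1), ε ≤ εf i := fun i =>
      Finset.inf'_le εf (Finset.mem_univ i)
    refine ⟨ε, hεpos', ?_⟩
    rintro ⟨y, hyT⟩ hyball
    rw [Metric.mem_ball, Subtype.dist_eq] at hyball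
    have hyc : ∀ j, |y j - x j| < ε := by
      intro j
      have := (dist_pi_lt_iff hεpos').1 hyball j
      rwa [Real.dist_eq] at this
    have hdi : ∀ i : Fin (n + 1),
        dist (y i.castSucc, y i.succ) (x i.castSucc, x i.succ) < εf i := by
      intro i
      rw [Prod.dist_eq]
      apply max_lt <;> rw [Real.dist_eq] <;>
        exact lt_of_lt_of_le (hyc _) (hεle i)
    have main : ∀ k : ℕ, ∀ i : Fin (n + 1), (i : ℕ) + k = n →
        (y i.castSucc, y i.succ) ∈ M.G0 (u i) := by
      intro k
      induction k with
      | zero =>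
        intro i hi
        have hil : i = Fin.last n := Fin.ext (by simpa using hi)
        subst hil
        exact (hεspec (Fin.last n)).1 hlast _ (traj_pair M hyT _) (hdi _)
      | succ k ih =>
        intro i hi
        rcases M.A_cover (u i) with hC | hC | hC
        · exact (hεspec i).1 (Or.inl hC) _ (traj_pair M hyT i) (hdi i)
        · exact (hεspec i).1 (Or.inr hC) _ (traj_pair M hyT i) (hdi i)
        · -- u i ∈ A2
          have hi1lt : (i : ℕ) + 1 < n + 1 := by omega
          set i1 : Fin (n + 1) := ⟨(i : ℕ) + 1, hi1lt⟩ with hi1def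
          have hnext := ih i1 (by simp only [hi1def]; omega)
          have hyD0 : y i1.castSucc ∈ M.D0 (u i1) := fst_mem_D0 M hnext
          have hieq : (⟨(i : ℕ), by omega⟩ : Fin (n + 1)) = i := Fin.ext rfl
          have hchain : M.D0 (u i1) ⊆ M.R0 (u i) := by
            have := lang_chain M hu (i : ℕ) hi1lt
            rwa [hieq] at this
          have hyR : y i1.castSucc ∈ M.R0 (u i) := hchain hyD0
          obtain ⟨q0, hq0, hRq⟩ := M.R_A2 (u i) hC
          have hR0q : M.R0 (u i) = {q0} := by rw [M.R0_A2 (u i) hC, hRq]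
          obtain ⟨p0, hp0, hDp⟩ := M.D_A12 (u i) (Or.inr hC)
          have hxG : (x i.castSucc, x i.succ) ∈ (M.D (u i)) ×ˢ (M.R (u i)) := by
            have := hxS i
            rwa [M.G0_A2 (u i) hC, M.Gr_A12 (u i) (Or.inr hC)] at this
          have hxq : x i.succ = q0 := by
            have := hxG.2; rw [hRq] at this; exact this
          have hyq : y i1.castSucc = q0 := by rw [hR0q] at hyR; exact hyR
          have hcs : i1.castSucc = i.succ := Fin.ext (by simp [hi1def])
          have hysucc : y i.succ = x i.succ := by
            have hyq' : y i.succ = q0 := by rw [← hcs]; exact hyq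
            rw [hyq', hxq]
          have hyGF : (y i.castSucc, x i.succ) ∈ M.GF := by
            rw [← hysucc]
            exact traj_pair M hyT i
          have hyfst : y i.castSucc = x i.castSucc :=
            (hεspec i).2 hC (y i.castSucc) hyGF
              (lt_of_lt_of_le (hyc i.castSucc) (hεle i))
          have hpair : ((y i.castSucc : ℝ), y i.succ) = (x i.castSucc, x i.succ) := by
            rw [hyfst, hysucc]
          rw [hpair]
          exact hxS i
    intro i
    exact main (n - (i : ℕ)) i (by omega)
  refine ⟨part1, fun a ha => ?_⟩
  exact ⟨1, fun _ => a, part1 0 (fun _ => a) (symbol_in_lang M a ha) ha, 0, rfl⟩
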